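/- If R is a commutative ring and 𝔭, 𝔮 are distinct prime ideals of R, then the tensor product of residue fields k(𝔭) ⊗_R k(𝔮) is zero, where k(𝔭) denotes the field of fractions of R/𝔭. -/
import Mathlib


open TensorProduct

lemma aux_14 {R : Type*} [CommRing R] (p q : Ideal R)
    [p.IsPrime] [q.IsPrime] {x : R} (hxp : x ∈ p) (hxq : x ∉ q) :
    Subsingleton (FractionRing (R ⧸ p) ⊗[R] FractionRing (R ⧸ q)) := by
  have hx0 : algebraMap R (FractionRing (R ⧸ p)) x = 0 := by
    rw [IsScalarTower.algebraMap_apply R (R ⧸ p) (FractionRing (R ⧸ p))]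
    rw [show (algebraMap R (R ⧸ p)) x = 0 from (Ideal.Quotient.eq_zero_iff_mem).2 hxp]
    simp
  have hxu : IsUnit (algebraMap R (FractionRing (R ⧸ q)) x) := by
    refine isUnit_iff_ne_zero.2 ?_
    rw [IsScalarTower.algebraMap_apply R (R ⧸ q) (FractionRing (R ⧸ q))]
    intro h0
    have : (algebraMap R (R ⧸ q)) x = 0 := (IsFractionRing.to_map_eq_zero_iff).1 h0
    exact hxq ((Ideal.Quotient.eq_zero_iff_mem).1 this)
  obtain ⟨u, hu⟩ := hxu
  refine subsingleton_of_forall_eq 0 fun z => ?_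
  induction z using TensorProduct.induction_on with
  | zero => rfl
  | tmul a b =>
      have key : a ⊗ₜ[R] b = (x • a) ⊗ₜ[R] ((↑u⁻¹ : FractionRing (R ⧸ q)) * b) := by
        rw [TensorProduct.smul_tmul, Algebra.smul_def, ← hu, ← mul_assoc, u.mul_inv,
          one_mul]
      rw [key, show x • a = 0 from by rw [Algebra.smul_def, hx0, zero_mul],
        TensorProduct.zero_tmul]
  | add x y hx hy => rw [hx, hy, add_zero]

theorem stmt_14 {R : Type*} [CommRing R] (p q : Ideal R)
    [p.IsPrime] [q.IsPrime] (h : p ≠ q) :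
    Subsingleton (FractionRing (R ⧸ p) ⊗[R] FractionRing (R ⧸ q)) := by
  have : (∃ x ∈ p, x ∉ q) ∨ (∃ x ∈ q, x ∉ p) := by
    by_contra hc
    push_neg at hc
    exact h (le_antisymm hc.1 hc.2)
  rcases this with ⟨x, hxp, hxq⟩ | ⟨x, hxq, hxp⟩
  · exact aux_14 p q hxp hxq
  · have := aux_14 q p hxq hxp
    exact (TensorProduct.comm R _ _).toEquiv.subsingleton
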